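/- Fix c ∈ F^L with deg c = d ≥ 1. Then the set of monic irreducible polynomials g of degree t over F having no roots in E and satisfying c ∈ C(g^{−1},t) has cardinality at most ⌊(d−1)/t⌋. -/

import Mathlib

open Polynomial

noncomputable section

/-- The orbit of `j : ZMod N` under multiplication by `q`. -/
def qOrbit (N q : ℕ) (j : ZMod N) : Set (ZMod N) :=
  Set.range fun k : ℕ => (q : ZMod N) ^ k * j

/-- The set `L` of orbits of `ZMod N` under multiplication by `q`. -/
def orbitSet (N q : ℕ) : Set (Set (ZMod N)) :=
  {l | ∃ j : ZMod N, l = qOrbit N q j}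

/-- `β ^ j` for a residue class `j`. -/
def bpow {E : Type*} [Monoid E] {N : ℕ} (β : E) (j : ZMod N) : E :=
  β ^ j.val

/-- The check-matrix entry `h_{i l} = ∑_{j ∈ l} ρ(β^j) β^{i j}`, as an element of `E`. -/
def hEntry {F E : Type*} [CommSemiring F] [CommSemiring E] [Algebra F E] {N : ℕ}
    (β : E) (ρ : Polynomial F) (i : ℕ) (l : Set (ZMod N)) : E :=
  ∑ᶠ j ∈ l, Polynomial.aeval (bpow β j) ρ * bpow β j ^ i

/-- The code `C(ρ, t)` inside `F^L`. -/
def codeSet (F E : Type*) [Field F] [Field E] [Algebra F E] (N q : ℕ)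
    (β : E) (ρ : Polynomial F) (t : ℕ) : Set (↥(orbitSet N q) → F) :=
  {c | ∀ i < t, ∑ᶠ l : orbitSet N q,
    algebraMap F E (c l) * hEntry β ρ i (l : Set (ZMod N)) = 0}

open scoped Classical in
/-- `deg c = ∑_{l : c_l ≠ 0} |l|`. -/
def wdeg {F : Type*} [Zero F] {N q : ℕ} (c : ↥(orbitSet N q) → F) : ℕ :=
  ∑ᶠ l : orbitSet N q, if c l ≠ 0 then (l : Set (ZMod N)).ncard else 0

section Orbits
variable {N q : ℕ}

lemma self_mem_qOrbit (j : ZMod N) : j ∈ qOrbit N q j := ⟨0, by simp⟩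

lemma qOrbit_subset {j j' : ZMod N} (h : j' ∈ qOrbit N q j) :
    qOrbit N q j' ⊆ qOrbit N q j := by
  obtain ⟨a, rfl⟩ := h
  rintro x ⟨k, rfl⟩
  refine ⟨k + a, ?_⟩
  show (q : ZMod N) ^ (k + a) * j = (q : ZMod N) ^ k * ((q : ZMod N) ^ a * j)
  rw [pow_add, mul_assoc]

lemma mem_qOrbit_symm (hq : ∃ n, 0 < n ∧ (q : ZMod N) ^ n = 1) {j j' : ZMod N}
    (h : j' ∈ qOrbit N q j) : j ∈ qOrbit N q j' := by
  obtain ⟨n, hn, hn1⟩ := hq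
  obtain ⟨a, rfl⟩ := h
  refine ⟨a * (n - 1), ?_⟩
  show (q : ZMod N) ^ (a * (n - 1)) * ((q : ZMod N) ^ a * j) = j
  rw [← mul_assoc, ← pow_add]
  have h2 : a * (n - 1) + a = n * a := by
    cases n with
    | zero => omega
    | succ k => rw [Nat.succ_sub_one]; ring
  rw [h2, pow_mul, hn1, one_pow, one_mul]

lemma qOrbit_eq (hq : ∃ n, 0 < n ∧ (q : ZMod N) ^ n = 1) {j j' : ZMod N}
    (h : j' ∈ qOrbit N q j) : qOrbit N q j' = qOrbit N q j :=
  subset_antisymm (qOrbit_subset h) (qOrbit_subset (mem_qOrbit_symm hq h))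

def oFun (N q : ℕ) (j : ZMod N) : ↥(orbitSet N q) := ⟨qOrbit N q j, j, rfl⟩

lemma mem_orbit_iff (hq : ∃ n, 0 < n ∧ (q : ZMod N) ^ n = 1)
    (l : ↥(orbitSet N q)) (j : ZMod N) :
    j ∈ (l : Set (ZMod N)) ↔ oFun N q j = l := by
  constructor
  · intro hj
    obtain ⟨j0, hl⟩ := l.2
    apply Subtype.ext
    show qOrbit N q j = (l : Set (ZMod N))
    rw [hl] at hj ⊢
    exact qOrbit_eq hq hj
  · rintro rfl; exact self_mem_qOrbit j

lemma finsum_orbit_eq [NeZero N] (hq : ∃ n, 0 < n ∧ (q : ZMod N) ^ n = 1)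
    {M : Type*} [AddCommMonoid M] (φ : ↥(orbitSet N q) → ZMod N → M) :
    ∑ᶠ l : ↥(orbitSet N q), ∑ᶠ j ∈ (l : Set (ZMod N)), φ l j
      = ∑ j : ZMod N, φ (oFun N q j) j := by
  classical
  haveI : Fintype ↥(orbitSet N q) := Fintype.ofFinite _
  rw [finsum_eq_sum_of_fintype]
  have h1 : ∀ l : ↥(orbitSet N q), ∑ᶠ j ∈ (l : Set (ZMod N)), φ l j
      = ∑ j ∈ Finset.univ.filter (fun j => oFun N q j = l), φ l j := by
    intro l
    rw [finsum_mem_eq_finite_toFinset_sum _ (Set.toFinite _)]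
    apply Finset.sum_congr _ (fun _ _ => rfl)
    ext j
    rw [Set.Finite.mem_toFinset, Finset.mem_filter]
    simp only [Finset.mem_univ, true_and]
    exact mem_orbit_iff hq l j
  calc ∑ l : ↥(orbitSet N q), ∑ᶠ j ∈ (l : Set (ZMod N)), φ l j
      = ∑ l : ↥(orbitSet N q), ∑ j ∈ Finset.univ.filter (fun j => oFun N q j = l), φ l j := by
        simp_rw [h1]
    _ = ∑ l : ↥(orbitSet N q), ∑ j ∈ Finset.univ.filter (fun j => oFun N q j = l),
          φ (oFun N q j) j := by
        refine Finset.sum_congr rfl fun l _ => Finset.sum_congr rfl fun j hj => ?_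
        rw [(Finset.mem_filter.mp hj).2]
    _ = ∑ j : ZMod N, φ (oFun N q j) j := Finset.sum_fiberwise _ _ _

end Orbits

section Goppa
variable {K : Type*} [Field K] {ι : Type*} [DecidableEq ι]

/-- Explicit quotient `(g - g(a))/(X - a)`. -/
def hquot (g : K[X]) (a : K) : K[X] :=
  ∑ s ∈ Finset.range (g.natDegree + 1), C (g.coeff s) *
    (∑ i ∈ Finset.range s, X ^ i * (C a) ^ (s - 1 - i))

lemma hquot_mul (g : K[X]) (a : K) : hquot g a * (X - C a) = g - C (g.eval a) := by
  unfold hquot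
  rw [Finset.sum_mul]
  have h1 : ∀ s ∈ Finset.range (g.natDegree + 1),
      C (g.coeff s) * (∑ i ∈ Finset.range s, X ^ i * (C a) ^ (s - 1 - i)) * (X - C a)
        = C (g.coeff s) * X ^ s - C (g.coeff s * a ^ s) := by
    intro s _
    rw [mul_assoc, geom_sum₂_mul, C_mul, ← C_pow, mul_sub]
  rw [Finset.sum_congr rfl h1, Finset.sum_sub_distrib]
  congr 1
  · conv_rhs => rw [g.as_sum_range]
    exact Finset.sum_congr rfl fun s _ => by rw [C_mul_X_pow_eq_monomial]
  · rw [← map_sum, g.eval_eq_sum_range]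

omit [DecidableEq ι] in
lemma sum_hquot_eq_zero (g : K[X]) (S : Finset ι) (α : ι → K) (u : ι → K)
    (hcond : ∀ i < g.natDegree, ∑ j ∈ S, u j * α j ^ i = 0) :
    ∑ j ∈ S, C (u j) * hquot g (α j) = 0 := by
  unfold hquot
  have expand : ∀ j, C (u j) * (∑ s ∈ Finset.range (g.natDegree + 1), C (g.coeff s) *
      (∑ i ∈ Finset.range s, X ^ i * (C (α j)) ^ (s - 1 - i)))
      = ∑ s ∈ Finset.range (g.natDegree + 1), ∑ i ∈ Finset.range s,
          (C (g.coeff s) * X ^ i) * C (u j * α j ^ (s - 1 - i)) := by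
    intro j
    rw [Finset.mul_sum]
    refine Finset.sum_congr rfl fun s _ => ?_
    rw [Finset.mul_sum, Finset.mul_sum]
    refine Finset.sum_congr rfl fun i _ => ?_
    rw [C_mul, C_pow]
    ring
  simp_rw [expand]
  rw [Finset.sum_comm]
  refine Finset.sum_eq_zero fun s hs => ?_
  rw [Finset.sum_comm]
  refine Finset.sum_eq_zero fun i hi => ?_
  rw [← Finset.mul_sum, ← map_sum, hcond (s - 1 - i) (by
    simp only [Finset.mem_range] at hs hi; omega), map_zero, mul_zero]

lemma goppa_dvd (g : K[X]) (S : Finset ι) (α : ι → K) (B : ι → K)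
    (hg : ∀ j ∈ S, g.eval (α j) ≠ 0)
    (hcond : ∀ i < g.natDegree,
      ∑ j ∈ S, (B j * (g.eval (α j))⁻¹) * α j ^ i = 0) :
    g ∣ ∑ j ∈ S, C (B j) * ∏ k ∈ S.erase j, (X - C (α k)) := by
  set u : ι → K := fun j => B j * (g.eval (α j))⁻¹ with hu
  refine ⟨∑ j ∈ S, C (u j) * ∏ k ∈ S.erase j, (X - C (α k)), ?_⟩
  have key : g * (∑ j ∈ S, C (u j) * ∏ k ∈ S.erase j, (X - C (α k)))
      - (∑ j ∈ S, C (B j) * ∏ k ∈ S.erase j, (X - C (α k)))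
      = (∑ j ∈ S, C (u j) * hquot g (α j)) * ∏ k ∈ S, (X - C (α k)) := by
    rw [Finset.mul_sum, ← Finset.sum_sub_distrib, Finset.sum_mul]
    refine Finset.sum_congr rfl fun j hj => ?_
    have hB : C (u j) * C (g.eval (α j)) = C (B j) := by
      rw [← C_mul, hu]
      congr 1
      field_simp [hg j hj]
    calc g * (C (u j) * ∏ k ∈ S.erase j, (X - C (α k)))
          - C (B j) * ∏ k ∈ S.erase j, (X - C (α k))
        = (C (u j) * (g - C (g.eval (α j)))) * ∏ k ∈ S.erase j, (X - C (α k)) := by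
          rw [← hB]; ring
      _ = (C (u j) * (hquot g (α j) * (X - C (α j)))) * ∏ k ∈ S.erase j, (X - C (α k)) := by
          rw [hquot_mul]
      _ = (C (u j) * hquot g (α j)) * ((X - C (α j)) * ∏ k ∈ S.erase j, (X - C (α k))) := by
          ring
      _ = (C (u j) * hquot g (α j)) * ∏ k ∈ S, (X - C (α k)) := by
          rw [Finset.mul_prod_erase S (fun k => X - C (α k)) hj]
  rw [sum_hquot_eq_zero g S α u hcond, zero_mul] at key
  exact (sub_eq_zero.mp key).symm

lemma goppa_ne_zero (S : Finset ι) (α : ι → K) (B : ι → K)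
    (hinj : Set.InjOn α S) (hB : ∀ j ∈ S, B j ≠ 0) (hS : S.Nonempty) :
    (∑ j ∈ S, C (B j) * ∏ k ∈ S.erase j, (X - C (α k))) ≠ 0 := by
  obtain ⟨j0, hj0⟩ := hS
  intro h0
  have hev : eval (α j0) (∑ j ∈ S, C (B j) * ∏ k ∈ S.erase j, (X - C (α k))) = 0 := by
    rw [h0, eval_zero]
  rw [eval_finset_sum] at hev
  have hsingle : ∀ j ∈ S, j ≠ j0 →
      eval (α j0) (C (B j) * ∏ k ∈ S.erase j, (X - C (α k))) = 0 := by
    intro j hj hne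
    rw [eval_mul, eval_prod]
    have : ∏ k ∈ S.erase j, eval (α j0) (X - C (α k)) = 0 :=
      Finset.prod_eq_zero (Finset.mem_erase.mpr ⟨hne.symm, hj0⟩) (by simp)
    rw [this, mul_zero]
  rw [Finset.sum_eq_single j0 hsingle (fun h => absurd hj0 h)] at hev
  rw [eval_mul, eval_C, eval_prod] at hev
  rcases mul_eq_zero.mp hev with h | h
  · exact hB j0 hj0 h
  · obtain ⟨k, hk, hk0⟩ := Finset.prod_eq_zero_iff.mp h
    rw [Finset.mem_erase] at hk
    simp only [eval_sub, eval_X, eval_C, sub_eq_zero] at hk0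
    exact hk.1 (hinj hk.2 hj0 hk0.symm)

lemma goppa_natDegree_le (S : Finset ι) (α : ι → K) (B : ι → K) :
    (∑ j ∈ S, C (B j) * ∏ k ∈ S.erase j, (X - C (α k))).natDegree ≤ S.card - 1 := by
  refine Polynomial.natDegree_sum_le_of_forall_le _ _ fun j hj => ?_
  refine le_trans (natDegree_C_mul_le _ _) ?_
  have : (∏ k ∈ S.erase j, (X - C (α k))).natDegree = (S.erase j).card := by
    rw [Polynomial.natDegree_prod_of_monic _ _ (fun k _ => monic_X_sub_C (α k))]
    simp
  rw [this, Finset.card_erase_of_mem hj]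

end Goppa

open scoped Classical in
lemma wdeg_eq_card {F : Type*} [Zero F] {N q : ℕ} [NeZero N]
    (hq : ∃ n, 0 < n ∧ (q : ZMod N) ^ n = 1) (c : ↥(orbitSet N q) → F) :
    wdeg c = ∑ j : ZMod N, (if c (oFun N q j) ≠ 0 then 1 else 0) := by
  unfold wdeg
  have h1 : ∀ l : ↥(orbitSet N q), (if c l ≠ 0 then (l : Set (ZMod N)).ncard else 0)
      = ∑ᶠ j ∈ (l : Set (ZMod N)), (if c l ≠ 0 then 1 else 0) := by
    intro l
    rw [finsum_mem_eq_finite_toFinset_sum _ (Set.toFinite _), Finset.sum_const,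
      Set.ncard_eq_toFinset_card _ (Set.toFinite _)]
    by_cases h : c l ≠ 0 <;> simp [h]
  simp_rw [h1]
  rw [finsum_orbit_eq hq]

lemma code_sum {F E : Type*} [Field F] [Field E] [Algebra F E] {N q : ℕ} [NeZero N]
    (hq : ∃ n, 0 < n ∧ (q : ZMod N) ^ n = 1) (β : E) (ρ : Polynomial F) (t : ℕ)
    {c : ↥(orbitSet N q) → F} (hc : c ∈ codeSet F E N q β ρ t) {i : ℕ} (hi : i < t) :
    ∑ j : ZMod N, algebraMap F E (c (oFun N q j)) *
      (Polynomial.aeval (β ^ j.val) ρ * (β ^ j.val) ^ i) = 0 := by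
  have h0 := hc i hi
  have h1 : ∀ l : ↥(orbitSet N q), algebraMap F E (c l) * hEntry β ρ i (l : Set (ZMod N))
      = ∑ᶠ j ∈ (l : Set (ZMod N)),
          algebraMap F E (c l) * (Polynomial.aeval (bpow β j) ρ * bpow β j ^ i) := by
    intro l
    unfold hEntry
    rw [finsum_mem_eq_finite_toFinset_sum _ (Set.toFinite _),
        finsum_mem_eq_finite_toFinset_sum _ (Set.toFinite _), Finset.mul_sum]
  simp_rw [h1] at h0
  rw [finsum_orbit_eq hq] at h0
  simpa [bpow] using h0


/-- For a fixed word `c` of degree `d ≥ 1`, the set of monic irreducible polynomials `g`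
of degree `t` over `F` with no roots in `E` and `c ∈ C(g⁻¹, t)` has at most
`⌊(d−1)/t⌋` elements. -/
theorem card_Gset_fixed_word_le (q m : ℕ) (hm : 0 < m) (hqm : Nat.Coprime q m)
    (F E : Type*) [Field F] [Field E] [Fintype F] [Fintype E] [Algebra F E]
    (hF : Fintype.card F = q) (hE : Fintype.card E = q ^ m)
    (β : E) (hβ : orderOf β = q ^ m - 1) (t : ℕ) (ht : 0 < t)
    (c : ↥(orbitSet (q ^ m - 1) q) → F) (d : ℕ) (hd : 0 < d) (hcd : wdeg c = d) :
    {g : Polynomial F | g.Monic ∧ Irreducible g ∧ g.natDegree = t ∧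
      (∀ x : E, Polynomial.aeval x g ≠ 0) ∧
      ∃ ginv : Polynomial F, ginv.degree < ((q ^ m - 1 : ℕ) : WithBot ℕ) ∧
        ((X : Polynomial F) ^ (q ^ m - 1) - 1 ∣ g * ginv - 1) ∧
        c ∈ codeSet F E (q ^ m - 1) q β ginv t}.ncard ≤ (d - 1) / t := by
  classical
  have hq2 : 2 ≤ q := by
    have := Fintype.one_lt_card (α := F)
    omega
  have h2qm : 2 ≤ q ^ m := le_trans hq2 (Nat.le_self_pow (by omega) q)
  have hNpos : 0 < q ^ m - 1 := by omega
  haveI : NeZero (q ^ m - 1) := ⟨by omega⟩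
  have hq : ∃ n, 0 < n ∧ (q : ZMod (q ^ m - 1)) ^ n = 1 := by
    refine ⟨m, hm, ?_⟩
    have h3 : ((q ^ m : ℕ) : ZMod (q ^ m - 1)) = (((q ^ m - 1) + 1 : ℕ) : ZMod (q ^ m - 1)) := by
      congr 1; omega
    push_cast at h3
    rw [ZMod.natCast_self] at h3
    simpa using h3
  set α : ZMod (q ^ m - 1) → E := fun j => β ^ j.val with hα
  have hβN : β ^ (q ^ m - 1) = 1 := by rw [← hβ]; exact pow_orderOf_eq_one β
  have hβ0 : β ≠ 0 := by
    intro h0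
    rw [h0, zero_pow (by omega : q ^ m - 1 ≠ 0)] at hβN
    exact zero_ne_one hβN
  have hαinj : Function.Injective α := by
    have key : ∀ x y : ZMod (q ^ m - 1), β ^ x.val = β ^ y.val → x.val ≤ y.val → x = y := by
      intro x y h hle
      have h1 : β ^ x.val * β ^ (y.val - x.val) = β ^ x.val * 1 := by
        rw [mul_one, ← pow_add, show x.val + (y.val - x.val) = y.val by omega]
        exact h.symm
      have h2 : β ^ (y.val - x.val) = 1 := mul_left_cancel₀ (pow_ne_zero _ hβ0) h1
      have h3 := orderOf_dvd_of_pow_eq_one h2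
      rw [hβ] at h3
      have hy := ZMod.val_lt y
      have h4 : y.val - x.val = 0 := Nat.eq_zero_of_dvd_of_lt h3 (by omega)
      exact ZMod.val_injective _ (by omega)
    intro a b hab
    have hab' : β ^ a.val = β ^ b.val := hab
    rcases le_total a.val b.val with h | h
    · exact key a b hab' h
    · exact (key b a hab'.symm h).symm
  set S : Finset (ZMod (q ^ m - 1)) :=
    Finset.univ.filter (fun j => c (oFun (q ^ m - 1) q j) ≠ 0) with hS
  have hScard : S.card = d := by
    rw [← hcd, wdeg_eq_card hq c, hS, Finset.card_filter]
  set B : ZMod (q ^ m - 1) → E := fun j => algebraMap F E (c (oFun (q ^ m - 1) q j)) with hB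
  have hBne : ∀ j ∈ S, B j ≠ 0 := by
    intro j hj h0
    rw [hS, Finset.mem_filter] at hj
    exact hj.2 ((algebraMap F E).injective (by rw [map_zero]; exact h0))
  set Fpoly : Polynomial E := ∑ j ∈ S, C (B j) * ∏ k ∈ S.erase j, (X - C (α k)) with hFp
  have hFne : Fpoly ≠ 0 :=
    goppa_ne_zero S α B hαinj.injOn hBne (by rw [← Finset.card_pos, hScard]; omega)
  have hFdeg : Fpoly.natDegree ≤ d - 1 := by
    rw [← hScard]; exact goppa_natDegree_le S α B
  rcases Set.finite_or_infinite {g : Polynomial F | g.Monic ∧ Irreducible g ∧ g.natDegree = t ∧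
      (∀ x : E, Polynomial.aeval x g ≠ 0) ∧
      ∃ ginv : Polynomial F, ginv.degree < ((q ^ m - 1 : ℕ) : WithBot ℕ) ∧
        ((X : Polynomial F) ^ (q ^ m - 1) - 1 ∣ g * ginv - 1) ∧
        c ∈ codeSet F E (q ^ m - 1) q β ginv t} with hfin | hinf
  swap
  · rw [hinf.ncard]; exact Nat.zero_le _
  rw [Set.ncard_eq_toFinset_card _ hfin]
  set T := hfin.toFinset with hT
  have hmemT : ∀ g ∈ T, g.Monic ∧ Irreducible g ∧ g.natDegree = t ∧
      (∀ x : E, Polynomial.aeval x g ≠ 0) ∧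
      ∃ ginv : Polynomial F, ginv.degree < ((q ^ m - 1 : ℕ) : WithBot ℕ) ∧
        ((X : Polynomial F) ^ (q ^ m - 1) - 1 ∣ g * ginv - 1) ∧
        c ∈ codeSet F E (q ^ m - 1) q β ginv t := fun g hg => hfin.mem_toFinset.mp hg
  have hdvd : ∀ g ∈ T, g.map (algebraMap F E) ∣ Fpoly := by
    intro g hg
    obtain ⟨hmon, hirr, hdeg, hroot, ginv, hginvdeg, hginvdvd, hcode⟩ := hmemT g hg
    set gE := g.map (algebraMap F E) with hgE
    have htE : gE.natDegree = t := by rw [hgE, natDegree_map, hdeg]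
    have hgEeval : ∀ x : E, gE.eval x = Polynomial.aeval x g := by
      intro x; rw [hgE, ← eval₂_eq_eval_map, ← aeval_def]
    have hevalne : ∀ j ∈ S, gE.eval (α j) ≠ 0 := by
      intro j _
      rw [hgEeval]
      exact hroot (α j)
    have hginveval : ∀ j : ZMod (q ^ m - 1),
        Polynomial.aeval (α j) ginv = (gE.eval (α j))⁻¹ := by
      intro j
      obtain ⟨w, hw⟩ := hginvdvd
      have hXN : Polynomial.aeval (α j) ((X : Polynomial F) ^ (q ^ m - 1) - 1) = 0 := by
        simp only [map_sub, map_one, map_pow, aeval_X]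
        show (β ^ j.val) ^ (q ^ m - 1) - 1 = 0
        rw [← pow_mul, mul_comm, pow_mul, hβN, one_pow, sub_self]
      have h7 := congrArg (Polynomial.aeval (α j)) hw
      rw [map_sub, map_mul, map_one, map_mul, hXN, zero_mul] at h7
      have h8 : Polynomial.aeval (α j) ginv * Polynomial.aeval (α j) g = 1 := by
        have h9 := sub_eq_zero.mp h7
        rw [mul_comm] at h9
        exact h9
      rw [hgEeval]
      exact eq_inv_of_mul_eq_one_left h8
    have hcond : ∀ i < gE.natDegree, ∑ j ∈ S, (B j * (gE.eval (α j))⁻¹) * α j ^ i = 0 := by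
      intro i hi
      rw [htE] at hi
      have h0 := code_sum hq β ginv t hcode hi
      have hzero : ∀ j ∈ Finset.univ, j ∉ S →
          algebraMap F E (c (oFun (q ^ m - 1) q j)) *
            (Polynomial.aeval (β ^ (j : ZMod (q ^ m - 1)).val) ginv
              * (β ^ (j : ZMod (q ^ m - 1)).val) ^ i) = 0 := by
        intro j _ hj
        rw [hS, Finset.mem_filter] at hj
        push_neg at hj
        rw [hj (Finset.mem_univ j), map_zero, zero_mul]
      rw [← Finset.sum_subset (Finset.subset_univ S) hzero] at h0
      rw [← h0]
      refine Finset.sum_congr rfl fun j hj => ?_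
      rw [← hginveval j]
      show B j * Polynomial.aeval (α j) ginv * α j ^ i
        = B j * (Polynomial.aeval (α j) ginv * α j ^ i)
      ring
    exact goppa_dvd gE S α B hevalne hcond
  have hpair : (↑T : Set (Polynomial F)).Pairwise
      (Function.onFun IsCoprime fun g => g.map (algebraMap F E)) := by
    intro g1 h1 g2 h2 hne
    obtain ⟨hm1, hi1, _⟩ := hmemT g1 (Finset.mem_coe.mp h1)
    obtain ⟨hm2, hi2, _⟩ := hmemT g2 (Finset.mem_coe.mp h2)
    have hcop : IsCoprime g1 g2 := by
      refine (hi1.coprime_iff_not_dvd).mpr fun hdvd12 => hne ?_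
      exact eq_of_monic_of_associated hm1 hm2 (hi1.associated_of_dvd hi2 hdvd12)
    have hmap := hcop.map (mapRingHom (algebraMap F E))
    simpa [coe_mapRingHom] using hmap
  have hproddvd : (∏ g ∈ T, g.map (algebraMap F E)) ∣ Fpoly :=
    Finset.prod_dvd_of_coprime hpair hdvd
  have hprodnat : (∏ g ∈ T, g.map (algebraMap F E)).natDegree = T.card * t := by
    rw [Polynomial.natDegree_prod_of_monic _ _ (fun g hg => ((hmemT g hg).1).map _)]
    rw [show (∑ g ∈ T, (g.map (algebraMap F E)).natDegree) = ∑ _g ∈ T, t from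
      Finset.sum_congr rfl (fun g hg => by rw [natDegree_map, (hmemT g hg).2.2.1])]
    rw [Finset.sum_const, smul_eq_mul]
  have hfinal := Polynomial.natDegree_le_of_dvd hproddvd hFne
  rw [hprodnat] at hfinal
  rw [Nat.le_div_iff_mul_le ht]
  omega
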